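/- Let R be a valuation domain, A a proper ideal, and suppose A = r·A^♯ for some nonzero r ∈ R. If R/A^♯ is complete in the R/A^♯-topology, then R/A is complete in the R/A-topology. -/

import Mathlib

open Pointwise

section Defs
universe u v
variable (R : Type u) [CommRing R]

/-- `U` is a pure submodule of its ambient module: `rU = U ∩ rM` for all `r`. -/
def IsPureSub {M : Type v} [AddCommGroup M] [Module R M] (U : Submodule R M) : Prop :=
  ∀ (r : R) (x : M), x ∈ U → (∃ m : M, r • m = x) → ∃ u ∈ U, r • u = x

/-- `U` is uniserial: its submodules are totally ordered by inclusion. -/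
def IsUniserialSub {M : Type v} [AddCommGroup M] [Module R M] (U : Submodule R M) : Prop :=
  ∀ A B : Submodule R ↥U, A ≤ B ∨ B ≤ A

/-- `U` is a direct summand of its ambient module. -/
def IsSummand {M : Type v} [AddCommGroup M] [Module R M] (U : Submodule R M) : Prop :=
  ∃ V : Submodule R M, IsCompl U V

/-- A (torsion-free) module is separable if every pure uniserial submodule is a summand. -/
def IsSeparableMod (M : Type v) [AddCommGroup M] [Module R M] : Prop :=
  ∀ U : Submodule R M, IsPureSub R U → IsUniserialSub R U → IsSummand R U

/-- `R/A` is complete in the `R/A`-topology: every coherent family of cosets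
`(aᵢ + Bᵢ)` with `⋂ᵢ Bᵢ = A` has a common point. -/
def IsCompleteQuot (A : Ideal R) : Prop :=
  ∀ (ι : Type u) (a : ι → R) (B : ι → Ideal R),
    (∀ i, A ≤ B i) → (∀ i j, B i ≤ B j → a i - a j ∈ B j) → (⨅ i, B i) = A →
    ∃ c : R, ∀ i, c - a i ∈ B i

/-- A valuation ring with maximal ideal `P` is maximal: `R/A` is complete in the
`R/A`-topology for every proper ideal `A` with `A ≠ Pa` for all nonzero `a`. -/
def IsMaximalVD (P : Ideal R) : Prop :=
  ∀ A : Ideal R, A ≠ ⊤ → (∀ a : R, a ≠ 0 → A ≠ Ideal.span {a} * P) → IsCompleteQuot R A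

/-- A module `M` is slender if every homomorphism `R^ℕ → M` kills almost all
standard unit vectors. -/
def IsSlender (M : Type v) [AddCommGroup M] [Module R M] : Prop :=
  ∀ f : ((ℕ → R) →ₗ[R] M), ∃ n₀ : ℕ, ∀ n ≥ n₀, f (Pi.single n 1) = 0

end Defs

/-- if `A = r·A^♯` for some nonzero `r` and `R/A^♯` is complete in the
`R/A^♯`-topology, then `R/A` is complete in the `R/A`-topology. -/
theorem stmt_17 {R : Type u} [CommRing R] [IsDomain R] [ValuationRing R]
    (A : Ideal R) (hA : A ≠ ⊤)
    (B : Ideal R) (hB : ∀ s : R, s ∈ B ↔ s • A ≠ A)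
    (r : R) (hr : r ≠ 0) (hAr : A = Ideal.span {r} * B)
    (h : IsCompleteQuot R B) :
    IsCompleteQuot R A := by
  intro ι a Bi hABi hcoh hinf
  have htot : ∀ I J : Ideal R, I ≤ J ∨ J ≤ I := fun I J => Std.Total.total I J
  have h1B : (1 : R) ∉ B := by
    intro h1
    exact (hB 1).1 h1 (one_smul _ _)
  have hmemA : ∀ x : R, x ∈ A ↔ ∃ b ∈ B, r * b = x := by
    intro x
    rw [hAr, Ideal.mem_span_singleton_mul]
  -- ι is nonempty
  by_cases hι : Nonempty ι
  swap
  · exfalso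
    apply hA
    rw [← hinf]
    rw [not_nonempty_iff] at hι
    simp [iInf_of_isEmpty]
  -- find i₀ with Bi i₀ ≤ (r)
  obtain ⟨i₀, hi₀⟩ : ∃ i, Bi i ≤ Ideal.span {r} := by
    by_contra hc
    push_neg at hc
    have hr' : ∀ i, Ideal.span {r} ≤ Bi i := fun i => (htot _ _).resolve_left (hc i)
    have hrA : r ∈ A := by
      have : Ideal.span {r} ≤ A := hinf ▸ le_iInf hr'
      exact this (Ideal.mem_span_singleton_self r)
    obtain ⟨b, hbB, hrb⟩ := (hmemA r).1 hrA
    have hb1 : b = 1 := mul_left_cancel₀ hr (hrb.trans (mul_one r).symm)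
    exact h1B (hb1 ▸ hbB)
  -- division of the coherent differences
  have hdiv : ∀ i : ι, Bi i ≤ Bi i₀ → ∃ z : R, a i - a i₀ = r * z := by
    intro i hi
    have : a i - a i₀ ∈ Ideal.span {r} := hi₀ (hcoh i i₀ hi)
    rw [Ideal.mem_span_singleton] at this
    obtain ⟨z, hz⟩ := this
    exact ⟨z, hz⟩
  choose! y hy using hdiv
  -- the "divided" ideals
  set C : ι → Ideal R := fun i => Submodule.comap (r • (LinearMap.id : R →ₗ[R] R)) (Bi i)
    with hC
  have hmemC : ∀ (i : ι) (x : R), x ∈ C i ↔ r * x ∈ Bi i := by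
    intro i x
    simp [hC, smul_eq_mul]
  have hBC : ∀ i, B ≤ C i := by
    intro i x hx
    rw [hmemC]
    exact hABi i ((hmemA (r * x)).2 ⟨x, hx, rfl⟩)
  have hCB : ∀ i j : ι, Bi i ≤ Bi i₀ → C i ≤ C j → Bi i ≤ Bi j := by
    intro i j hii₀ hcij x hx
    obtain ⟨z, hz⟩ := Ideal.mem_span_singleton.1 (hi₀ (hii₀ hx))
    have : z ∈ C i := (hmemC i z).2 (hz ▸ hx)
    have := (hmemC j z).1 (hcij this)
    exact hz ▸ this
  -- apply completeness of R/B to the subfamily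
  obtain ⟨c', hc'⟩ := h {i : ι // Bi i ≤ Bi i₀} (fun i => y i.1) (fun i => C i.1)
    (fun i => hBC i.1)
    (by
      rintro ⟨i, hi⟩ ⟨j, hj⟩ hle
      have hij : Bi i ≤ Bi j := hCB i j hi hle
      have h1 : a i - a j ∈ Bi j := hcoh i j hij
      have h2 : a i - a j = r * (y i - y j) := by
        rw [mul_sub, ← hy i hi, ← hy j hj]; ring
      exact (hmemC j (y i - y j)).2 (h2 ▸ h1))
    (by
      refine le_antisymm ?_ (le_iInf fun i => hBC i.1)
      intro x hx
      have hall : ∀ i : ι, r * x ∈ Bi i := by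
        intro i
        rcases htot (Bi i) (Bi i₀) with hle | hge
        · exact (hmemC i x).1 (Submodule.mem_iInf _ |>.1 hx ⟨i, hle⟩)
        · exact hge ((hmemC i₀ x).1 (Submodule.mem_iInf _ |>.1 hx ⟨i₀, le_refl _⟩))
      have : r * x ∈ A := hinf ▸ (Submodule.mem_iInf _).2 hall
      obtain ⟨b, hbB, hrb⟩ := (hmemA (r * x)).1 this
      have : b = x := mul_left_cancel₀ hr hrb
      exact this ▸ hbB)
  refine ⟨a i₀ + r * c', fun i => ?_⟩
  rcases htot (Bi i) (Bi i₀) with hle | hge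
  · have h1 : c' - y i ∈ C i := hc' ⟨i, hle⟩
    have h2 : a i₀ + r * c' - a i = r * (c' - y i) := by
      rw [mul_sub, ← hy i hle]; ring
    exact h2 ▸ (hmemC i _).1 h1
  · have h1 : c' - y i₀ ∈ C i₀ := hc' ⟨i₀, le_refl _⟩
    have hy0 : a i₀ - a i₀ = r * y i₀ := hy i₀ (le_refl _)
    have h2 : a i₀ + r * c' - a i = r * (c' - y i₀) + (a i₀ - a i) := by
      rw [mul_sub, ← hy0]; ring
    rw [h2]
    exact Ideal.add_mem _ (hge ((hmemC i₀ _).1 h1)) (hcoh i₀ i hge)
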